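/- Let φ : G → H be a homomorphism of finitely generated groups, and for a group K let FdRep^fin ℂ K denote the full subcategory of FdRep ℂ K consisting of those finite-dimensional complex representations ρ whose image ρ(K) ⊆ GL(V) is a finite group. Then precomposition with φ gives an equivalence of categories FdRep^fin ℂ H → FdRep^fin ℂ G if and only if for every finite group Q, precomposition with φ gives a bijection Hom(H, Q) → Hom(G, Q). -/

import Mathlib

open CategoryTheory

/-- `optionCongr` as a monoid hom on permutations. -/
private def permOptionHom (α : Type*) : Equiv.Perm α →* Equiv.Perm (Option α) where
  toFun e := e.optionCongr
  map_one' := Equiv.optionCongr_refl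
  map_mul' a b := Equiv.optionCongr_trans b a

/-- If `S` is a proper subgroup of a finite group `Q`, there are two distinct homomorphisms
from `Q` to a finite group agreeing on `S`. -/
private lemma exists_ne_homs_eqOn {Q : Type} [Group Q] [Finite Q] (S : Subgroup Q) (hS : S ≠ ⊤) :
    ∃ (K : Type) (_ : Group K) (_ : Finite K) (f g : Q →* K),
      f ≠ g ∧ ∀ s ∈ S, f s = g s := by
  classical
  obtain ⟨q, hq⟩ : ∃ q : Q, q ∉ S := by
    by_contra h
    push_neg at h
    exact hS (Subgroup.eq_top_iff' S |>.2 h)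
  haveI : Finite (Q ⧸ S) := Quotient.finite _
  haveI : Fintype (Q ⧸ S) := Fintype.ofFinite _
  set X := Option (Q ⧸ S) with hX
  haveI : Finite X := by rw [hX]; infer_instance
  set x₀ : Q ⧸ S := ((1 : Q) : Q ⧸ S) with hx₀
  let f : Q →* Equiv.Perm X := (permOptionHom _).comp (MulAction.toPermHom Q (Q ⧸ S))
  let σ : Equiv.Perm X := Equiv.swap none (some x₀)
  let g : Q →* Equiv.Perm X := (MulAut.conj σ).toMonoidHom.comp f
  have hfnone : ∀ a : Q, f a none = none := fun a => rfl
  have hfsome : ∀ (a : Q) (y : Q ⧸ S), f a (some y) = some (a • y) := fun a y => rfl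
  have hσinv : σ⁻¹ = σ := Equiv.swap_inv _ _
  have hsmul : ∀ a : Q, a • x₀ = ((a : Q) : Q ⧸ S) := by
    intro a
    rw [hx₀]
    show ((a * 1 : Q) : Q ⧸ S) = ((a : Q) : Q ⧸ S)
    rw [mul_one]
  have hmem : ∀ a : Q, ((a : Q ⧸ S) = x₀) ↔ a ∈ S := by
    intro a
    rw [hx₀, QuotientGroup.eq]
    simp
  have hfix : ∀ t : Q, t ∈ S → t • x₀ = x₀ := fun t ht => by
    rw [hsmul]; exact (hmem t).2 ht
  refine ⟨Equiv.Perm X, inferInstance, inferInstance, f, g, ?_, ?_⟩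
  · intro hfg
    have h1 : f q (some x₀) = some (q • x₀) := hfsome q x₀
    have h2 : g q (some x₀) = some x₀ := by
      show (σ * f q * σ⁻¹) (some x₀) = some x₀
      rw [hσinv]
      simp only [Equiv.Perm.mul_apply]
      rw [show σ (some x₀) = none from Equiv.swap_apply_right _ _, hfnone,
        show σ none = some x₀ from Equiv.swap_apply_left _ _]
    rw [hfg] at h1
    rw [h1] at h2
    have : q • x₀ = x₀ := by injection h2
    rw [hsmul] at this
    exact hq ((hmem q).1 this)
  · intro s hs
    have hsx₀ : s • x₀ = x₀ := hfix s hs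
    have hgs : g s = σ * f s * σ⁻¹ := rfl
    rw [hgs, hσinv]
    refine Equiv.ext fun x => ?_
    simp only [Equiv.Perm.mul_apply]
    match x with
    | none =>
      rw [show σ none = some x₀ from Equiv.swap_apply_left _ _, hfsome, hsx₀,
        show σ (some x₀) = none from Equiv.swap_apply_right _ _, hfnone]
    | some y =>
      by_cases hy : y = x₀
      · subst hy
        rw [show σ (some x₀) = none from Equiv.swap_apply_right _ _, hfnone,
          show σ none = some x₀ from Equiv.swap_apply_left _ _, hfsome, hsx₀]
      · have h1 : σ (some y) = some y :=
          Equiv.swap_apply_of_ne_of_ne (show (some y : X) ≠ none by simp)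
            (show (some y : X) ≠ some x₀ by simpa using hy)
        rw [h1, hfsome]
        have h2 : s • y ≠ x₀ := by
          intro h
          apply hy
          have h3 : s⁻¹ • s • y = s⁻¹ • x₀ := congrArg (s⁻¹ • ·) h
          rw [smul_smul, inv_mul_cancel, one_smul, hfix s⁻¹ (inv_mem hs)] at h3
          exact h3
        exact (Equiv.swap_apply_of_ne_of_ne (show (some (s • y) : X) ≠ none by simp)
          (show (some (s • y) : X) ≠ some x₀ by simpa using h2)).symm

/-- If precomposition with `φ` is injective on homs into finite groups, then `φ(G)`
surjects onto every finite quotient of `H`. -/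
private lemma exists_eq_of_injective {G H : Type} [Group G] [Group H] (φ : G →* H)
    (hinj : ∀ (Q : Type) [Group Q] [Finite Q],
      Function.Injective (fun ψ : H →* Q => ψ.comp φ))
    (Q : Type) [Group Q] [Finite Q] (π : H →* Q) (h : H) : ∃ g, π (φ g) = π h := by
  classical
  set π' : H →* π.range := π.rangeRestrict with hπ'
  set S : Subgroup π.range := (π'.comp φ).range with hSdef
  by_cases hS : S = ⊤
  · have : π' h ∈ S := hS ▸ Subgroup.mem_top _
    obtain ⟨g, hg⟩ := this
    exact ⟨g, congrArg Subtype.val hg⟩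
  · exfalso
    obtain ⟨K, _, _, f, g, hfg, hagree⟩ := exists_ne_homs_eqOn S hS
    have hcomp : (f.comp π').comp φ = (g.comp π').comp φ := by
      ext x
      exact hagree (π' (φ x)) ⟨x, rfl⟩
    have := hinj K hcomp
    apply hfg
    ext q
    obtain ⟨h', rfl⟩ := π.rangeRestrict_surjective q
    exact DFunLike.congr_fun this h'

private lemma finite_range_toHomUnits {H M : Type*} [Group H] [Monoid M] (ρ : H →* M)
    (hfin : (Set.range ⇑ρ).Finite) : (Set.range ⇑ρ.toHomUnits).Finite := by
  have hval : Function.Injective (Units.val : Mˣ → M) := fun _ _ h => Units.ext h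
  apply Set.Finite.of_finite_image _ hval.injOn
  rw [← Set.range_comp]
  have : (Units.val : Mˣ → M) ∘ ⇑ρ.toHomUnits = ⇑ρ := funext fun h => rfl
  rw [this]; exact hfin

private lemma finite_subgroup_range {H K : Type*} [Group H] [Group K] (f : H →* K)
    (hfin : (Set.range ⇑f).Finite) : Finite f.range := by
  have : ((f.range : Set K)).Finite := by rw [MonoidHom.coe_range]; exact hfin
  exact this.to_subtype

/-- The left regular permutation representation of a finite group. -/
private noncomputable def permRep (Q : Type) [Group Q] [Fintype Q] :
    Representation ℂ Q (MonoidAlgebra ℂ Q) :=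
  Representation.ofMulAction ℂ Q Q

private noncomputable instance permRep_finite (Q : Type) [Group Q] [Fintype Q] :
    Module.Finite ℂ (MonoidAlgebra ℂ Q) :=
  Module.Finite.equiv (MonoidAlgebra.coeffLinearEquiv ℂ).symm

private lemma permRep_injective (Q : Type) [Group Q] [Fintype Q] :
    Function.Injective ⇑(permRep Q) := by
  intro a b hab
  have h1 := congrArg (fun f => f (MonoidAlgebra.single (1 : Q) (1 : ℂ))) hab
  simp only [permRep, Representation.ofMulAction_single] at h1
  have h2 := MonoidAlgebra.single_left_injective (one_ne_zero (α := ℂ)) h1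
  simpa using h2

/-- The full subcategory of `FDRep ℂ K` consisting of the finite dimensional complex
representations `ρ` of `K` whose image `ρ(K)` is finite. -/
def FiniteImageFDRep (K : Type) [Group K] : Type 1 :=
  CategoryTheory.ObjectProperty.FullSubcategory (fun V : FDRep ℂ K => (Set.range ⇑V.ρ).Finite)

noncomputable instance (K : Type) [Group K] : Category (FiniteImageFDRep K) :=
  CategoryTheory.ObjectProperty.FullSubcategory.category _

/-- The functor on representations with finite image induced by precomposition with
a group homomorphism `φ : G →* H`. -/
noncomputable def finiteImageRes {G H : Type} [Group G] [Group H] (φ : G →* H) :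
    FiniteImageFDRep H ⥤ FiniteImageFDRep G :=
  CategoryTheory.ObjectProperty.lift _
    (ObjectProperty.ι _ ⋙
      (Action.res (FGModuleCat ℂ) φ : FDRep ℂ H ⥤ FDRep ℂ G))
    (fun V => V.property.subset (by
      rintro x ⟨g, rfl⟩
      exact ⟨φ g, rfl⟩))

set_option maxHeartbeats 1600000 in
/-- **Grothendieck–Malcev** (conditions (1) and (3) of Theorem 1):
for a homomorphism `φ : G → H` of finitely generated groups, precomposition with `φ`
is an equivalence between the categories of finite dimensional complex representations
with finite image if and only if precomposition with `φ` is bijective on homomorphisms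
into every finite group. -/
theorem finiteImageRes_isEquivalence_iff_bijective_on_finite_quotients
    {G H : Type} [Group G] [Group H] [Group.FG G] [Group.FG H] (φ : G →* H) :
    (finiteImageRes φ).IsEquivalence ↔
      ∀ (Q : Type) [Group Q] [Finite Q],
        Function.Bijective (fun ψ : H →* Q => ψ.comp φ) := by
  constructor
  · intro heq
    haveI := heq
    classical
    -- Injectivity on homs into finite groups, from fullness.
    have hinj : ∀ (Q : Type) [Group Q] [Finite Q],
        Function.Injective (fun ψ : H →* Q => ψ.comp φ) := by
      intro Q _ _ ψ₁ ψ₂ hcomp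
      haveI : Fintype Q := Fintype.ofFinite Q
      have hfin : ∀ ψ : H →* Q, (Set.range ⇑((permRep Q).comp ψ)).Finite := fun ψ =>
        (Set.finite_range ⇑(permRep Q)).subset (by rintro x ⟨h, rfl⟩; exact ⟨ψ h, rfl⟩)
      set A₁ : FiniteImageFDRep H := ⟨FDRep.of ((permRep Q).comp ψ₁), hfin ψ₁⟩ with hA₁
      set A₂ : FiniteImageFDRep H := ⟨FDRep.of ((permRep Q).comp ψ₂), hfin ψ₂⟩ with hA₂
      have hcomm : ∀ g : G, Action.ρ ((finiteImageRes φ).obj A₁).obj g ≫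
          𝟙 (FGModuleCat.of ℂ (MonoidAlgebra ℂ Q)) =
          𝟙 (FGModuleCat.of ℂ (MonoidAlgebra ℂ Q)) ≫ Action.ρ ((finiteImageRes φ).obj A₂).obj g := by
        intro g
        refine (Category.comp_id _).trans (Eq.trans ?_ (Category.id_comp _).symm)
        apply InducedCategory.hom_ext; apply ModuleCat.hom_ext; apply LinearMap.ext; intro x
        show permRep Q (ψ₁ (φ g)) x = permRep Q (ψ₂ (φ g)) x
        rw [show ψ₁ (φ g) = ψ₂ (φ g) from DFunLike.congr_fun hcomp g]
      obtain ⟨u, hu⟩ := (finiteImageRes φ).map_surjective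
        (X := A₁) (Y := A₂) (ObjectProperty.homMk ⟨𝟙 (FGModuleCat.of ℂ (MonoidAlgebra ℂ Q)), hcomm⟩)
      have huhom : u.hom.hom = 𝟙 (FGModuleCat.of ℂ (MonoidAlgebra ℂ Q)) := congrArg (fun w => w.hom.hom) hu
      ext h
      have hc := u.hom.comm h
      rw [huhom, Category.id_comp, Category.comp_id] at hc
      exact permRep_injective Q (congrArg (fun w => w.hom.hom) hc)
    have hdense := exists_eq_of_injective φ hinj
    intro Q _ _
    refine ⟨hinj Q, ?_⟩
    intro χ
    haveI : Fintype Q := Fintype.ofFinite Q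
    have hfinχ : (Set.range ⇑((permRep Q).comp χ)).Finite :=
      (Set.finite_range ⇑(permRep Q)).subset (by rintro x ⟨h, rfl⟩; exact ⟨χ h, rfl⟩)
    set A : FiniteImageFDRep G := ⟨FDRep.of ((permRep Q).comp χ), hfinχ⟩ with hA
    set B := (finiteImageRes φ).objPreimage A with hB
    set i : (finiteImageRes φ).obj B ≅ A := (finiteImageRes φ).objObjPreimageIso A with hi
    set j : ((ObjectProperty.ι _).obj ((finiteImageRes φ).obj B)) ≅ A.obj :=
      (ObjectProperty.ι _).mapIso i with hj
    set e := FDRep.isoToLinearEquiv j with he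
    set ρB := FDRep.ρ B.obj with hρB
    have hconj : ∀ g : G, permRep Q (χ g) = e.conj (ρB (φ g)) := fun g =>
      FDRep.Iso.conj_ρ j g
    set ρ' : H →* (↥(A.obj) →ₗ[ℂ] ↥(A.obj)) :=
      { toFun := fun h => e.conj (ρB h)
        map_one' := by
          show e.conj (ρB 1) = 1
          rw [map_one]
          exact LinearEquiv.conj_id e
        map_mul' := fun a b => by
          show e.conj (ρB (a * b)) = e.conj (ρB a) * e.conj (ρB b)
          rw [map_mul]
          exact LinearEquiv.conj_comp e (ρB b) (ρB a) } with hρ'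
    have hρ'fin : (Set.range ⇑ρ').Finite := by
      refine (B.property.image (fun f => e.conj f)).subset ?_
      rintro x ⟨h, rfl⟩
      exact ⟨ρB h, ⟨h, rfl⟩, rfl⟩
    haveI : Finite ρ'.toHomUnits.range :=
      finite_subgroup_range _ (finite_range_toHomUnits _ hρ'fin)
    have hfact : ∀ h : H, ∃ q : Q, permRep Q q = ρ' h := by
      intro h
      obtain ⟨g, hg⟩ := hdense _ ρ'.toHomUnits.rangeRestrict h
      have h1 : ρ'.toHomUnits (φ g) = ρ'.toHomUnits h := congrArg Subtype.val hg
      have h2 : ρ' (φ g) = ρ' h := congrArg Units.val h1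
      refine ⟨χ g, ?_⟩
      rw [← h2]
      exact hconj g
    choose ψfun hψfun using hfact
    have hψmul : ∀ a b : H, ψfun (a * b) = ψfun a * ψfun b := by
      intro a b
      apply permRep_injective Q
      rw [map_mul, hψfun, hψfun, hψfun, map_mul]
    have hψone : ψfun 1 = 1 := by
      apply permRep_injective Q
      rw [hψfun, map_one, map_one]
    refine ⟨⟨⟨ψfun, hψone⟩, hψmul⟩, ?_⟩
    ext g
    show ψfun (φ g) = χ g
    apply permRep_injective Q
    rw [hψfun]
    exact (hconj g).symm
  · intro hbij
    have hinj : ∀ (Q : Type) [Group Q] [Finite Q],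
        Function.Injective (fun ψ : H →* Q => ψ.comp φ) := fun Q _ _ => (hbij Q).1
    have hdense := exists_eq_of_injective φ hinj
    haveI hFaithful : (finiteImageRes φ).Faithful := by
      constructor
      intro X Y u v huv
      have h1 := congrArg (fun w => w.hom.hom) huv
      exact ObjectProperty.hom_ext _ (Action.Hom.ext h1)
    haveI hFull : (finiteImageRes φ).Full := by
      constructor
      intro X Y f
      set ρV := FDRep.ρ X.obj with hρV
      set ρW := FDRep.ρ Y.obj with hρW
      set τ : H →* _ := ρV.toHomUnits.prod ρW.toHomUnits with hτ
      have hτfin : (Set.range ⇑τ).Finite := by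
        refine ((finite_range_toHomUnits _ X.property).prod
          (finite_range_toHomUnits _ Y.property)).subset ?_
        rintro x ⟨h, rfl⟩
        exact ⟨⟨h, rfl⟩, ⟨h, rfl⟩⟩
      haveI : Finite τ.range := finite_subgroup_range _ hτfin
      have hcomm : ∀ h : H, Action.ρ X.obj h ≫ f.hom.hom = f.hom.hom ≫ Action.ρ Y.obj h := by
        intro h
        obtain ⟨g, hg⟩ := hdense _ τ.rangeRestrict h
        have h1 : τ (φ g) = τ h := congrArg Subtype.val hg
        have hV : ρV (φ g) = ρV h := congrArg Units.val (congrArg Prod.fst h1)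
        have hW : ρW (φ g) = ρW h := congrArg Units.val (congrArg Prod.snd h1)
        have hV' : Action.ρ X.obj (φ g) = Action.ρ X.obj h := by
          apply InducedCategory.hom_ext; apply ModuleCat.hom_ext; apply LinearMap.ext; intro x
          exact LinearMap.congr_fun hV x
        have hW' : Action.ρ Y.obj (φ g) = Action.ρ Y.obj h := by
          apply InducedCategory.hom_ext; apply ModuleCat.hom_ext; apply LinearMap.ext; intro x
          exact LinearMap.congr_fun hW x
        rw [← hV', ← hW']
        exact f.hom.comm g
      exact ⟨ObjectProperty.homMk ⟨f.hom.hom, hcomm⟩, rfl⟩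
    haveI hEss : (finiteImageRes φ).EssSurj := by
      constructor
      intro X
      set ρX := FDRep.ρ X.obj with hρX
      haveI : Finite ρX.toHomUnits.range :=
        finite_subgroup_range _ (finite_range_toHomUnits _ X.property)
      obtain ⟨ψ, hψ⟩ := (hbij ρX.toHomUnits.range).2 ρX.toHomUnits.rangeRestrict
      set ρ' : H →* (↥(X.obj) →ₗ[ℂ] ↥(X.obj)) :=
        (Units.coeHom _).comp (ρX.toHomUnits.range.subtype.comp ψ) with hρ'
      have hext : ∀ g : G, ρ' (φ g) = ρX g := by
        intro g
        exact congrArg (fun q : ρX.toHomUnits.range => Units.val q.val)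
          (DFunLike.congr_fun hψ g)
      have hWfin : (Set.range ⇑ρ').Finite := by
        refine X.property.subset ?_
        rintro x ⟨h, rfl⟩
        obtain ⟨g, hg⟩ := (ψ h).2
        exact ⟨g, congrArg Units.val hg⟩
      refine ⟨⟨FDRep.of ρ', hWfin⟩, ⟨?_⟩⟩
      refine (ObjectProperty.ι _).preimageIso ?_
      refine Action.mkIso (Iso.refl _) ?_
      intro g
      rw [Iso.refl_hom]
      refine (Category.comp_id _).trans (Eq.trans ?_ (Category.id_comp _).symm)
      apply InducedCategory.hom_ext; apply ModuleCat.hom_ext; apply LinearMap.ext; intro x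
      exact LinearMap.congr_fun (hext g) x
    exact ⟨hFaithful, hFull, hEss⟩
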